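/- Coverage of Repeated Subsampling, lower bound: Suppose (Z̃_1,…,Z̃_{K+1}) satisfies hierarchical exchangeability, a measurable score function s is fitted on training groups Z̃_1,…,Z̃_{K₀}, and the Repeated Subsampling prediction set is Ĉ(x) = {y : s(x,y) ≤ T} with T = Q_{1−α}( Σ_{b=1}^{B} Σ_{k=K₀+1}^{K} (1/(B(K₁+1))) δ_{s(Z_{k,i_k^{(b)}})} + (1/(K₁+1)) δ_{+∞} ), where for each calibration group k the indices i_k^{(1)},…,i_k^{(B)} are sampled uniformly with replacement from {1,…,N_k}, independently across groups and independently of the data given group sizes, and K₁ = K − K₀. Then, with test point (X_test, Y_test) = Z_{K+1,1}, P(Y_test ∈ Ĉ(X_test)) ≥ 1 − α. -/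

import Mathlib

open MeasureTheory ProbabilityTheory
open scoped ENNReal

noncomputable section

/-- Extend a permutation of `Fin m` to `ℕ` by the identity outside `{0, …, m-1}`. -/
def permExt {m : ℕ} (σ : Equiv.Perm (Fin m)) : ℕ → ℕ :=
  fun i => if h : i < m then (σ ⟨i, h⟩ : ℕ) else i

/-- The representation of the groups `0, …, L-1` of a hierarchical data set:
group `k` is recorded as the pair of its size `N k ω` and its sequence of observations. -/
def hierData {Ω 𝒵 : Type*} (L : ℕ) (N : ℕ → Ω → ℕ) (Z : ℕ → ℕ → Ω → 𝒵) :
    Ω → Fin L → ℕ × (ℕ → 𝒵) :=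
  fun ω k => (N k.1 ω, fun i => Z k.1 i ω)

/-- Hierarchical exchangeability (Definition 1.1) of the groups `0, …, L-1`:
(i) the groups are exchangeable with each other, and (ii) for each `k` and each `m`
with `P(N_k = m) > 0`, conditionally on `N_k = m` the first `m` observations within
group `k` are exchangeable. -/
def HierExch {Ω 𝒵 : Type*} [MeasurableSpace Ω] [MeasurableSpace 𝒵] (L : ℕ)
    (P : Measure Ω) (N : ℕ → Ω → ℕ) (Z : ℕ → ℕ → Ω → 𝒵) : Prop :=
  (∀ σ : Equiv.Perm (Fin L),
      Measure.map (fun ω => fun k : Fin L => hierData L N Z ω (σ k)) P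
        = Measure.map (hierData L N Z) P) ∧
  (∀ k, k < L → ∀ m : ℕ, 0 < P {ω | N k ω = m} → ∀ σ : Equiv.Perm (Fin m),
      Measure.map
          (hierData L N fun k' i => if k' = k then Z k' (permExt σ i) else Z k' i)
          (ProbabilityTheory.cond P {ω | N k ω = m})
        = Measure.map (hierData L N Z) (ProbabilityTheory.cond P {ω | N k ω = m}))

/-- The `(1-β)`-quantile `Q_{1-β}(μ) = inf {t : μ((-∞, t]) ≥ 1-β}` of a distribution `μ`
on the extended real line. -/
def erealQuantile (β : ℝ) (μ : Measure EReal) : EReal :=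
  sInf {t : EReal | ENNReal.ofReal β ≤ μ (Set.Iic t)}

section Quantile

variable {μ μ' : Measure EReal} {β : ℝ}

lemma quantile_attained (hfin : ∀ t, μ (Set.Iic t) ≠ ⊤)
    (hβ : ENNReal.ofReal β ≤ μ Set.univ) :
    ENNReal.ofReal β ≤ μ (Set.Iic (erealQuantile β μ)) := by
  set S : Set EReal := {t : EReal | ENNReal.ofReal β ≤ μ (Set.Iic t)} with hS
  have hne : S.Nonempty := ⟨⊤, by simp only [hS, Set.mem_setOf_eq, Set.Iic_top]; exact hβ⟩
  obtain ⟨u, hanti, htend, hmem⟩ := exists_seq_tendsto_sInf hne (OrderBot.bddBelow S)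
  have hIic : Set.Iic (sInf S) = ⋂ n, Set.Iic (u n) := by
    apply Set.Subset.antisymm
    · exact Set.subset_iInter fun n => Set.Iic_subset_Iic.2 (csInf_le (OrderBot.bddBelow S) (hmem n))
    · intro x hx
      simp only [Set.mem_iInter, Set.mem_Iic] at hx ⊢
      exact ge_of_tendsto htend (Filter.Eventually.of_forall hx)
  have htendμ : Filter.Tendsto (fun n => μ (Set.Iic (u n))) Filter.atTop
      (nhds (μ (⋂ n, Set.Iic (u n)))) := by
    refine tendsto_measure_iInter_atTop (fun n => (measurableSet_Iic).nullMeasurableSet)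
      (fun m n hmn => Set.Iic_subset_Iic.2 (hanti hmn)) ⟨0, hfin _⟩
  rw [erealQuantile, ← hS, hIic]
  exact ge_of_tendsto htendμ (Filter.Eventually.of_forall fun n => hmem n)

lemma quantile_le_iff (hfin : ∀ t, μ (Set.Iic t) ≠ ⊤)
    (hβ : ENNReal.ofReal β ≤ μ Set.univ) {t : EReal} :
    erealQuantile β μ ≤ t ↔ ENNReal.ofReal β ≤ μ (Set.Iic t) := by
  constructor
  · intro h
    exact le_trans (quantile_attained hfin hβ) (measure_mono (Set.Iic_subset_Iic.2 h))
  · intro h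
    exact csInf_le (OrderBot.bddBelow _) h

lemma quantile_mono (h : ∀ t, μ (Set.Iic t) ≤ μ' (Set.Iic t)) :
    erealQuantile β μ' ≤ erealQuantile β μ :=
  sInf_le_sInf fun t ht => le_trans ht (h t)

end Quantile

section Fiber

variable {Ω : Type*} [MeasurableSpace Ω]

lemma measure_eq_of_fibers (μ : Measure Ω) (f : Ω → ℕ) (hf : Measurable f)
    {s t : Set Ω} (hs : MeasurableSet s) (ht : MeasurableSet t)
    (h : ∀ m, μ (s ∩ f ⁻¹' {m}) = μ (t ∩ f ⁻¹' {m})) : μ s = μ t := by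
  have key : ∀ (S : Set Ω), MeasurableSet S → μ S = ∑' m, μ (S ∩ f ⁻¹' {m}) := by
    intro S hS
    rw [← measure_iUnion]
    · congr 1
      ext x
      simp
    · intro m n hmn
      refine Set.disjoint_left.2 fun x hx hx' => hmn ?_
      have := hx.2; have := hx'.2
      simp only [Set.mem_preimage, Set.mem_singleton_iff] at *
      omega
    · exact fun m => hS.inter (hf (measurableSet_singleton m))
  rw [key s hs, key t ht]
  exact tsum_congr h

lemma cond_inv_fiber (μ : Measure Ω) [IsFiniteMeasure μ] {s : Set Ω}
    (hs : MeasurableSet s) (Φ : Ω → Ω) (hΦ : Measurable Φ)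
    (hinv : 0 < μ s → Measure.map Φ (ProbabilityTheory.cond μ s) = ProbabilityTheory.cond μ s)
    {a a' : Set Ω} (ha : MeasurableSet a) (ha' : MeasurableSet a')
    (haa' : Φ ⁻¹' a ∩ s = a' ∩ s) : μ (a ∩ s) = μ (a' ∩ s) := by
  rcases eq_or_lt_of_le (zero_le : 0 ≤ μ s) with h0 | hpos
  · have h1 : μ (a ∩ s) = 0 :=
      le_antisymm (le_trans (measure_mono Set.inter_subset_right) h0.symm.le) zero_le
    have h2 : μ (a' ∩ s) = 0 :=
      le_antisymm (le_trans (measure_mono Set.inter_subset_right) h0.symm.le) zero_le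
    rw [h1, h2]
  · have hmap := hinv hpos
    have h1 : (Measure.map Φ (ProbabilityTheory.cond μ s)) a
        = (ProbabilityTheory.cond μ s) a := by rw [hmap]
    rw [Measure.map_apply hΦ ha, ProbabilityTheory.cond_apply hs, ProbabilityTheory.cond_apply hs] at h1
    have hcanc : μ (s ∩ Φ ⁻¹' a) = μ (s ∩ a) := by
      have hne : (μ s)⁻¹ ≠ 0 := ENNReal.inv_ne_zero.2 (measure_ne_top μ s)
      have hne' : (μ s)⁻¹ ≠ ⊤ := ENNReal.inv_ne_top.2 hpos.ne'
      exact (ENNReal.mul_right_strictMono hne hne').injective h1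
    calc μ (a ∩ s) = μ (s ∩ a) := by rw [Set.inter_comm]
    _ = μ (s ∩ Φ ⁻¹' a) := hcanc.symm
    _ = μ (a' ∩ s) := by rw [Set.inter_comm, haa']
end Fiber

section Defs

variable {𝒵 : Type*} [MeasurableSpace 𝒵]

def trainD (K K₀ : ℕ) (h : K₀ ≤ K) (d : Fin (K+1) → ℕ × (ℕ → 𝒵)) : Fin K₀ → ℕ × (ℕ → 𝒵) :=
  fun j => d ⟨j.1, by omega⟩

def cIdx (K K₀ : ℕ) (h : K₀ ≤ K) (j : Fin (K - K₀)) : Fin (K+1) := ⟨K₀ + j.1, by omega⟩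

def scAt (K K₀ : ℕ) (h : K₀ ≤ K) (A : (Fin K₀ → ℕ × (ℕ → 𝒵)) → 𝒵 → ℝ)
    (d : Fin (K+1) → ℕ × (ℕ → 𝒵)) (k : Fin (K+1)) (i : ℕ) : EReal :=
  ((A (trainD K K₀ h d) ((d k).2 i) : ℝ) : EReal)

def subI (K : ℕ) (d : Fin (K+1) → ℕ × (ℕ → 𝒵)) (k : Fin (K+1)) (x : ℝ) : ℕ :=
  ⌊x * (((d k).1 : ℕ) : ℝ)⌋₊

def Scal (K K₀ B : ℕ) (h : K₀ ≤ K) (A : (Fin K₀ → ℕ × (ℕ → 𝒵)) → 𝒵 → ℝ)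
    (d : Fin (K+1) → ℕ × (ℕ → 𝒵)) (u : Fin (K - K₀) × Fin B → ℝ) (b : Fin B)
    (j : Fin (K - K₀)) : EReal :=
  scAt K K₀ h A d (cIdx K K₀ h j) (subI K d (cIdx K K₀ h j) (u (j, b)))

def Stst (K K₀ : ℕ) (h : K₀ ≤ K) (A : (Fin K₀ → ℕ × (ℕ → 𝒵)) → 𝒵 → ℝ)
    (d : Fin (K+1) → ℕ × (ℕ → 𝒵)) (x : ℝ) : EReal :=
  scAt K K₀ h A d (Fin.last K) (subI K d (Fin.last K) x)

def Stest (K K₀ : ℕ) (h : K₀ ≤ K) (A : (Fin K₀ → ℕ × (ℕ → 𝒵)) → 𝒵 → ℝ)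
    (d : Fin (K+1) → ℕ × (ℕ → 𝒵)) : EReal :=
  scAt K K₀ h A d (Fin.last K) 0

def wgt (K K₀ B : ℕ) : ℝ≥0∞ := ((B : ℝ≥0∞) * ((K - K₀ + 1 : ℕ) : ℝ≥0∞))⁻¹

def μcal (K K₀ B : ℕ) (h : K₀ ≤ K) (A : (Fin K₀ → ℕ × (ℕ → 𝒵)) → 𝒵 → ℝ)
    (d : Fin (K+1) → ℕ × (ℕ → 𝒵)) (u : Fin (K - K₀) × Fin B → ℝ) : Measure EReal :=
  (∑ b : Fin B, ∑ j : Fin (K - K₀), wgt K K₀ B • Measure.dirac (Scal K K₀ B h A d u b j))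
    + ((K - K₀ + 1 : ℕ) : ℝ≥0∞)⁻¹ • Measure.dirac (⊤ : EReal)

def μfull (K K₀ B : ℕ) (h : K₀ ≤ K) (A : (Fin K₀ → ℕ × (ℕ → 𝒵)) → 𝒵 → ℝ)
    (d : Fin (K+1) → ℕ × (ℕ → 𝒵)) (u : Fin (K - K₀) × Fin B → ℝ) (v : Fin B → ℝ) :
    Measure EReal :=
  (∑ b : Fin B, ∑ j : Fin (K - K₀), wgt K K₀ B • Measure.dirac (Scal K K₀ B h A d u b j))
    + ∑ b : Fin B, wgt K K₀ B • Measure.dirac (Stst K K₀ h A d (v b))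

variable {K K₀ B : ℕ} {h : K₀ ≤ K} {A : (Fin K₀ → ℕ × (ℕ → 𝒵)) → 𝒵 → ℝ}

lemma wgt_cancel (hB : 0 < B) : ((B : ℝ≥0∞) * ((K - K₀ + 1 : ℕ) : ℝ≥0∞)) * wgt K K₀ B = 1 := by
  rw [wgt]
  refine ENNReal.mul_inv_cancel ?_ ?_
  · simp only [ne_eq, mul_eq_zero, Nat.cast_eq_zero]
    push_neg
    omega
  · exact ENNReal.mul_ne_top (ENNReal.natCast_ne_top B) (ENNReal.natCast_ne_top _)

lemma B_mul_wgt (hB : 0 < B) : (B : ℝ≥0∞) * wgt K K₀ B = ((K - K₀ + 1 : ℕ) : ℝ≥0∞)⁻¹ := by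
  rw [wgt, ENNReal.mul_inv (Or.inl (by exact_mod_cast hB.ne')) (Or.inl (ENNReal.natCast_ne_top B)),
    ← mul_assoc, ENNReal.mul_inv_cancel (by exact_mod_cast hB.ne') (ENNReal.natCast_ne_top B), one_mul]

lemma μcal_apply (d : Fin (K+1) → ℕ × (ℕ → 𝒵)) (u : Fin (K - K₀) × Fin B → ℝ)
    {s : Set EReal} (hs : MeasurableSet s) :
    μcal K K₀ B h A d u s
      = (∑ b : Fin B, ∑ j : Fin (K - K₀),
          s.indicator (fun _ => wgt K K₀ B) (Scal K K₀ B h A d u b j))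
        + s.indicator (fun _ => ((K - K₀ + 1 : ℕ) : ℝ≥0∞)⁻¹) (⊤ : EReal) := by
  rw [μcal, Measure.add_apply, Measure.smul_apply, Measure.dirac_apply' _ hs]
  congr 1
  · rw [Measure.finset_sum_apply]
    refine Finset.sum_congr rfl fun b _ => ?_
    rw [Measure.finset_sum_apply]
    refine Finset.sum_congr rfl fun j _ => ?_
    rw [Measure.smul_apply, Measure.dirac_apply' _ hs]
    classical
    by_cases hmem : Scal K K₀ B h A d u b j ∈ s <;>
      simp [Set.indicator_apply, hmem]
  · classical
    by_cases hmem : (⊤ : EReal) ∈ s <;> simp [Set.indicator_apply, hmem]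

lemma μfull_apply (d : Fin (K+1) → ℕ × (ℕ → 𝒵)) (u : Fin (K - K₀) × Fin B → ℝ) (v : Fin B → ℝ)
    {s : Set EReal} (hs : MeasurableSet s) :
    μfull K K₀ B h A d u v s
      = (∑ b : Fin B, ∑ j : Fin (K - K₀),
          s.indicator (fun _ => wgt K K₀ B) (Scal K K₀ B h A d u b j))
        + ∑ b : Fin B, s.indicator (fun _ => wgt K K₀ B) (Stst K K₀ h A d (v b)) := by
  rw [μfull, Measure.add_apply]
  congr 1
  · rw [Measure.finset_sum_apply]
    refine Finset.sum_congr rfl fun b _ => ?_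
    rw [Measure.finset_sum_apply]
    refine Finset.sum_congr rfl fun j _ => ?_
    rw [Measure.smul_apply, Measure.dirac_apply' _ hs]
    classical
    by_cases hmem : Scal K K₀ B h A d u b j ∈ s <;> simp [Set.indicator_apply, hmem]
  · rw [Measure.finset_sum_apply]
    refine Finset.sum_congr rfl fun b _ => ?_
    rw [Measure.smul_apply, Measure.dirac_apply' _ hs]
    classical
    by_cases hmem : Stst K K₀ h A d (v b) ∈ s <;> simp [Set.indicator_apply, hmem]

lemma cast_succ_ne_zero (n : ℕ) : ((n + 1 : ℕ) : ℝ≥0∞) ≠ 0 := by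
  exact_mod_cast Nat.succ_ne_zero n

lemma μcal_univ (hB : 0 < B) (d : Fin (K+1) → ℕ × (ℕ → 𝒵)) (u : Fin (K - K₀) × Fin B → ℝ) :
    μcal K K₀ B h A d u Set.univ = 1 := by
  have hB' : (B : ℝ≥0∞) ≠ 0 := by exact_mod_cast hB.ne'
  have hBt : (B : ℝ≥0∞) ≠ ⊤ := ENNReal.natCast_ne_top B
  rw [μcal_apply d u MeasurableSet.univ]
  simp only [Set.indicator_univ, Finset.sum_const, Finset.card_univ, Fintype.card_fin,
    nsmul_eq_mul]
  have hw : (B : ℝ≥0∞) * (((K - K₀ : ℕ)) : ℝ≥0∞) * wgt K K₀ B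
      = ((K - K₀ : ℕ) : ℝ≥0∞) * ((K - K₀ + 1 : ℕ) : ℝ≥0∞)⁻¹ := by
    rw [wgt, ENNReal.mul_inv (Or.inl hB') (Or.inl hBt), mul_comm (B : ℝ≥0∞),
      mul_assoc, ← mul_assoc (B : ℝ≥0∞), ENNReal.mul_inv_cancel hB' hBt, one_mul]
  rw [← mul_assoc, hw]
  have : ((K - K₀ : ℕ) : ℝ≥0∞) * ((K - K₀ + 1 : ℕ) : ℝ≥0∞)⁻¹ + ((K - K₀ + 1 : ℕ) : ℝ≥0∞)⁻¹
      = ((K - K₀ + 1 : ℕ) : ℝ≥0∞) * ((K - K₀ + 1 : ℕ) : ℝ≥0∞)⁻¹ := by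
    push_cast
    ring
  rw [this, ENNReal.mul_inv_cancel (cast_succ_ne_zero _) (ENNReal.natCast_ne_top _)]

lemma μfull_univ (hB : 0 < B) (d : Fin (K+1) → ℕ × (ℕ → 𝒵)) (u : Fin (K - K₀) × Fin B → ℝ)
    (v : Fin B → ℝ) : μfull K K₀ B h A d u v Set.univ = 1 := by
  rw [μfull_apply d u v MeasurableSet.univ]
  simp only [Set.indicator_univ, Finset.sum_const, Finset.card_univ, Fintype.card_fin,
    nsmul_eq_mul]
  have : (B : ℝ≥0∞) * (((K - K₀ : ℕ)) : ℝ≥0∞) * wgt K K₀ B + (B : ℝ≥0∞) * wgt K K₀ B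
      = ((B : ℝ≥0∞) * ((K - K₀ + 1 : ℕ) : ℝ≥0∞)) * wgt K K₀ B := by
    push_cast
    ring
  rw [← mul_assoc, this, wgt_cancel hB]

end Defs

section Meas

variable {𝒵 : Type*} [MeasurableSpace 𝒵] {K K₀ B : ℕ} {h : K₀ ≤ K}
  {A : (Fin K₀ → ℕ × (ℕ → 𝒵)) → 𝒵 → ℝ}
lemma meas_eval : Measurable fun q : (ℕ → 𝒵) × ℕ => q.1 q.2 :=
  measurable_from_prod_countable_left fun i => measurable_pi_apply i

lemma meas_scAt_comp (hA : Measurable fun q : (Fin K₀ → ℕ × (ℕ → 𝒵)) × 𝒵 => A q.1 q.2) {Ω : Type*} [MeasurableSpace Ω]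
    {f : Ω → Fin (K+1) → ℕ × (ℕ → 𝒵)} (hf : Measurable f) (k : Fin (K+1))
    {g : Ω → ℕ} (hg : Measurable g) :
    Measurable fun ω => scAt K K₀ h A (f ω) k (g ω) := by
  refine measurable_coe_real_ereal.comp (hA.comp (Measurable.prodMk ?_ ?_))
  · exact measurable_pi_lambda _ fun j => (measurable_pi_apply _).comp hf
  · exact meas_eval.comp (Measurable.prodMk
      (((measurable_pi_apply k).comp hf).snd) hg)

lemma meas_subI_comp {Ω : Type*} [MeasurableSpace Ω]
    {f : Ω → Fin (K+1) → ℕ × (ℕ → 𝒵)} (hf : Measurable f) (k : Fin (K+1))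
    {x : Ω → ℝ} (hx : Measurable x) :
    Measurable fun ω => subI K (f ω) k (x ω) := by
  refine Nat.measurable_floor.comp (hx.mul ?_)
  exact measurable_from_nat.comp (((measurable_pi_apply k).comp hf).fst)

lemma meas_Scal (hA : Measurable fun q : (Fin K₀ → ℕ × (ℕ → 𝒵)) × 𝒵 => A q.1 q.2) {Ω : Type*} [MeasurableSpace Ω]
    {f : Ω → Fin (K+1) → ℕ × (ℕ → 𝒵)} (hf : Measurable f)
    {u : Ω → Fin (K - K₀) × Fin B → ℝ} (hu : Measurable u) (b : Fin B) (j : Fin (K - K₀)) :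
    Measurable fun ω => Scal K K₀ B h A (f ω) (u ω) b j :=
  meas_scAt_comp hA hf _ (meas_subI_comp hf _ ((measurable_pi_apply _).comp hu))

lemma meas_Stst (hA : Measurable fun q : (Fin K₀ → ℕ × (ℕ → 𝒵)) × 𝒵 => A q.1 q.2) {Ω : Type*} [MeasurableSpace Ω]
    {f : Ω → Fin (K+1) → ℕ × (ℕ → 𝒵)} (hf : Measurable f)
    {x : Ω → ℝ} (hx : Measurable x) :
    Measurable fun ω => Stst K K₀ h A (f ω) (x ω) :=
  meas_scAt_comp hA hf _ (meas_subI_comp hf _ hx)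

lemma meas_Stest (hA : Measurable fun q : (Fin K₀ → ℕ × (ℕ → 𝒵)) × 𝒵 => A q.1 q.2) {Ω : Type*} [MeasurableSpace Ω]
    {f : Ω → Fin (K+1) → ℕ × (ℕ → 𝒵)} (hf : Measurable f) :
    Measurable fun ω => Stest K K₀ h A (f ω) :=
  meas_scAt_comp hA hf _ measurable_const

lemma meas_μcal_Iic (hA : Measurable fun q : (Fin K₀ → ℕ × (ℕ → 𝒵)) × 𝒵 => A q.1 q.2) {Ω : Type*} [MeasurableSpace Ω]
    {f : Ω → Fin (K+1) → ℕ × (ℕ → 𝒵)} (hf : Measurable f)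
    {u : Ω → Fin (K - K₀) × Fin B → ℝ} (hu : Measurable u) (t : EReal) :
    Measurable fun ω => μcal K K₀ B h A (f ω) (u ω) (Set.Iic t) := by
  have : (fun ω => μcal K K₀ B h A (f ω) (u ω) (Set.Iic t))
      = fun ω => (∑ b : Fin B, ∑ j : Fin (K - K₀),
          (Set.Iic t).indicator (fun _ => wgt K K₀ B) (Scal K K₀ B h A (f ω) (u ω) b j))
        + (Set.Iic t).indicator (fun _ => ((K - K₀ + 1 : ℕ) : ℝ≥0∞)⁻¹) (⊤ : EReal) := by
    funext ω
    exact μcal_apply _ _ measurableSet_Iic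
  rw [this]
  refine Measurable.add ?_ measurable_const
  refine Finset.measurable_sum _ fun b _ => Finset.measurable_sum _ fun j _ => ?_
  exact (Measurable.indicator measurable_const measurableSet_Iic).comp (meas_Scal hA hf hu b j)

lemma meas_μfull_Iic (hA : Measurable fun q : (Fin K₀ → ℕ × (ℕ → 𝒵)) × 𝒵 => A q.1 q.2) {Ω : Type*} [MeasurableSpace Ω]
    {f : Ω → Fin (K+1) → ℕ × (ℕ → 𝒵)} (hf : Measurable f)
    {u : Ω → Fin (K - K₀) × Fin B → ℝ} (hu : Measurable u)
    {v : Ω → Fin B → ℝ} (hv : Measurable v) (t : EReal) :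
    Measurable fun ω => μfull K K₀ B h A (f ω) (u ω) (v ω) (Set.Iic t) := by
  have : (fun ω => μfull K K₀ B h A (f ω) (u ω) (v ω) (Set.Iic t))
      = fun ω => (∑ b : Fin B, ∑ j : Fin (K - K₀),
          (Set.Iic t).indicator (fun _ => wgt K K₀ B) (Scal K K₀ B h A (f ω) (u ω) b j))
        + ∑ b : Fin B,
          (Set.Iic t).indicator (fun _ => wgt K K₀ B) (Stst K K₀ h A (f ω) (v ω b)) := by
    funext ω
    exact μfull_apply _ _ _ measurableSet_Iic
  rw [this]
  refine Measurable.add ?_ ?_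
  · refine Finset.measurable_sum _ fun b _ => Finset.measurable_sum _ fun j _ => ?_
    exact (Measurable.indicator measurable_const measurableSet_Iic).comp (meas_Scal hA hf hu b j)
  · refine Finset.measurable_sum _ fun b _ => ?_
    exact (Measurable.indicator measurable_const measurableSet_Iic).comp
      (meas_Stst hA hf ((measurable_pi_apply b).comp hv))

lemma μcal_Iic_ne_top (hB : 0 < B) (d : Fin (K+1) → ℕ × (ℕ → 𝒵)) (u : Fin (K - K₀) × Fin B → ℝ)
    (t : EReal) : μcal K K₀ B h A d u (Set.Iic t) ≠ ⊤ := by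
  refine ne_top_of_le_ne_top (by simp : (1 : ℝ≥0∞) ≠ ⊤) ?_
  rw [← μcal_univ (h := h) (A := A) hB d u]
  exact measure_mono (Set.subset_univ _)

lemma μfull_Iic_ne_top (hB : 0 < B) (d : Fin (K+1) → ℕ × (ℕ → 𝒵)) (u : Fin (K - K₀) × Fin B → ℝ)
    (v : Fin B → ℝ) (t : EReal) : μfull K K₀ B h A d u v (Set.Iic t) ≠ ⊤ := by
  refine ne_top_of_le_ne_top (by simp : (1 : ℝ≥0∞) ≠ ⊤) ?_
  rw [← μfull_univ (h := h) (A := A) hB d u v]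
  exact measure_mono (Set.subset_univ _)

lemma meas_Qcal (hA : Measurable fun q : (Fin K₀ → ℕ × (ℕ → 𝒵)) × 𝒵 => A q.1 q.2) {α : ℝ} (hα : ENNReal.ofReal (1 - α) ≤ 1) (hB : 0 < B)
    {Ω : Type*} [MeasurableSpace Ω]
    {f : Ω → Fin (K+1) → ℕ × (ℕ → 𝒵)} (hf : Measurable f)
    {u : Ω → Fin (K - K₀) × Fin B → ℝ} (hu : Measurable u) :
    Measurable fun ω => erealQuantile (1 - α) (μcal K K₀ B h A (f ω) (u ω)) := by
  refine measurable_of_Iic fun t => ?_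
  have : (fun ω => erealQuantile (1 - α) (μcal K K₀ B h A (f ω) (u ω))) ⁻¹' Set.Iic t
      = {ω | ENNReal.ofReal (1 - α) ≤ μcal K K₀ B h A (f ω) (u ω) (Set.Iic t)} := by
    ext ω
    simp only [Set.mem_preimage, Set.mem_Iic, Set.mem_setOf_eq]
    exact quantile_le_iff (μcal_Iic_ne_top hB _ _)
      (by rw [μcal_univ (h := h) (A := A) hB]; exact hα)
  rw [this]
  exact measurableSet_le measurable_const (meas_μcal_Iic hA hf hu t)

lemma meas_Qfull (hA : Measurable fun q : (Fin K₀ → ℕ × (ℕ → 𝒵)) × 𝒵 => A q.1 q.2) {α : ℝ} (hα : ENNReal.ofReal (1 - α) ≤ 1) (hB : 0 < B)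
    {Ω : Type*} [MeasurableSpace Ω]
    {f : Ω → Fin (K+1) → ℕ × (ℕ → 𝒵)} (hf : Measurable f)
    {u : Ω → Fin (K - K₀) × Fin B → ℝ} (hu : Measurable u)
    {v : Ω → Fin B → ℝ} (hv : Measurable v) :
    Measurable fun ω => erealQuantile (1 - α) (μfull K K₀ B h A (f ω) (u ω) (v ω)) := by
  refine measurable_of_Iic fun t => ?_
  have : (fun ω => erealQuantile (1 - α) (μfull K K₀ B h A (f ω) (u ω) (v ω))) ⁻¹' Set.Iic t
      = {ω | ENNReal.ofReal (1 - α) ≤ μfull K K₀ B h A (f ω) (u ω) (v ω) (Set.Iic t)} := by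
    ext ω
    simp only [Set.mem_preimage, Set.mem_Iic, Set.mem_setOf_eq]
    exact quantile_le_iff (μfull_Iic_ne_top hB _ _ _)
      (by rw [μfull_univ (h := h) (A := A) hB]; exact hα)
  rw [this]
  exact measurableSet_le measurable_const (meas_μfull_Iic hA hf hu hv t)

end Meas



lemma measurePreserving_comp_perm {ι : Type*} [Fintype ι] {X : Type*} [MeasurableSpace X]
    (κ : Measure X) [SigmaFinite κ] (e : ι ≃ ι) :
    MeasurePreserving (fun w : ι → X => fun i => w (e i))
      (Measure.pi fun _ => κ) (Measure.pi fun _ => κ) := by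
  have h := measurePreserving_piCongrLeft (fun _ : ι => κ) e.symm
  have heq : (fun w : ι → X => fun i => w (e i))
      = ⇑(MeasurableEquiv.piCongrLeft (fun _ : ι => X) e.symm) := by
    funext w
    ext i
    have := Equiv.piCongrLeft_apply_apply (fun _ : ι => X) e.symm w (e i)
    simp only [Equiv.symm_apply_apply] at this
    rw [MeasurableEquiv.coe_piCongrLeft]
    rw [← this]
  rw [heq]
  exact h

lemma measurePreserving_prod_swapPi {ι₁ ι₂ : Type*} [Fintype ι₁] [Fintype ι₂]
    {X : Type*} [MeasurableSpace X] (κ : Measure X) [SigmaFinite κ] (e : ι₁ ⊕ ι₂ ≃ ι₁ ⊕ ι₂) :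
    MeasurePreserving
      (fun p : (ι₁ → X) × (ι₂ → X) =>
        ((fun i => Sum.elim p.1 p.2 (e (Sum.inl i))), (fun i => Sum.elim p.1 p.2 (e (Sum.inr i)))))
      ((Measure.pi fun _ : ι₁ => κ).prod (Measure.pi fun _ : ι₂ => κ))
      ((Measure.pi fun _ : ι₁ => κ).prod (Measure.pi fun _ : ι₂ => κ)) := by
  have h1 := measurePreserving_sumPiEquivProdPi_symm (fun _ : ι₁ ⊕ ι₂ => κ)
  have h2 := measurePreserving_comp_perm (ι := ι₁ ⊕ ι₂) κ e
  have h3 := measurePreserving_sumPiEquivProdPi (fun _ : ι₁ ⊕ ι₂ => κ)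
  have hcomp := (h3.comp h2).comp h1
  have heq : (⇑(MeasurableEquiv.sumPiEquivProdPi fun _ : ι₁ ⊕ ι₂ => X) ∘
        (fun w : ι₁ ⊕ ι₂ → X => fun i => w (e i)) ∘
        ⇑(MeasurableEquiv.sumPiEquivProdPi fun _ : ι₁ ⊕ ι₂ => X).symm)
      = (fun p : (ι₁ → X) × (ι₂ → X) =>
        ((fun i => Sum.elim p.1 p.2 (e (Sum.inl i))), (fun i => Sum.elim p.1 p.2 (e (Sum.inr i))))) := by
    funext p
    rcases p with ⟨u, v⟩
    have hsymm : (MeasurableEquiv.sumPiEquivProdPi (fun _ : ι₁ ⊕ ι₂ => X)).symm (u, v)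
        = Sum.elim u v := by
      ext i
      rcases i with i | i <;> rfl
    simp only [Function.comp_apply, hsymm]
    rfl
  rw [Function.comp_assoc] at hcomp
  rw [heq] at hcomp
  exact hcomp

section Slice

variable {𝒵 : Type*} [MeasurableSpace 𝒵] {K K₀ B : ℕ} {h : K₀ ≤ K}
  {A : (Fin K₀ → ℕ × (ℕ → 𝒵)) → 𝒵 → ℝ}

def permGrp (K : ℕ) {m : ℕ} (σ : Equiv.Perm (Fin m)) (d : Fin (K+1) → ℕ × (ℕ → 𝒵)) :
    Fin (K+1) → ℕ × (ℕ → 𝒵) :=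
  fun j => if j = Fin.last K then ((d j).1, fun i => (d j).2 (permExt σ i)) else d j

lemma meas_permGrp (K : ℕ) {m : ℕ} (σ : Equiv.Perm (Fin m)) :
    Measurable (permGrp (𝒵 := 𝒵) K σ) := by
  refine measurable_pi_lambda _ fun j => ?_
  by_cases hj : j = Fin.last K
  · simp only [permGrp, hj, if_true]
    refine Measurable.prodMk ((measurable_pi_apply _).fst) ?_
    exact measurable_pi_lambda _ fun i =>
      (measurable_pi_apply (permExt σ i)).comp ((measurable_pi_apply _).snd)
  · simp only [permGrp, hj, if_false]
    exact measurable_pi_apply _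

lemma permGrp_fst (K : ℕ) {m : ℕ} (σ : Equiv.Perm (Fin m)) (d : Fin (K+1) → ℕ × (ℕ → 𝒵))
    (j : Fin (K+1)) : (permGrp K σ d j).1 = (d j).1 := by
  rw [permGrp]
  split_ifs <;> rfl

lemma permGrp_ne (K : ℕ) {m : ℕ} (σ : Equiv.Perm (Fin m)) (d : Fin (K+1) → ℕ × (ℕ → 𝒵))
    {j : Fin (K+1)} (hj : j ≠ Fin.last K) : permGrp K σ d j = d j := by
  rw [permGrp, if_neg hj]

lemma trainD_permGrp {m : ℕ} (σ : Equiv.Perm (Fin m)) (d : Fin (K+1) → ℕ × (ℕ → 𝒵)) :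
    trainD K K₀ h (permGrp K σ d) = trainD K K₀ h d := by
  funext j
  rw [trainD, trainD, permGrp_ne]
  intro hj
  have : j.1 = K := congrArg Fin.val hj
  omega

lemma cIdx_ne_last (j : Fin (K - K₀)) : cIdx K K₀ h j ≠ Fin.last K := by
  intro hj
  have : K₀ + j.1 = K := congrArg Fin.val hj
  omega

lemma Scal_permGrp {m : ℕ} (σ : Equiv.Perm (Fin m)) (d : Fin (K+1) → ℕ × (ℕ → 𝒵))
    (u : Fin (K - K₀) × Fin B → ℝ) (b : Fin B) (j : Fin (K - K₀)) :
    Scal K K₀ B h A (permGrp K σ d) u b j = Scal K K₀ B h A d u b j := by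
  have h1 : permGrp K σ d (cIdx K K₀ h j) = d (cIdx K K₀ h j) :=
    permGrp_ne K σ d (cIdx_ne_last j)
  rw [Scal, Scal, scAt, scAt, trainD_permGrp, subI, subI, h1]

lemma μcal_permGrp {m : ℕ} (σ : Equiv.Perm (Fin m)) (d : Fin (K+1) → ℕ × (ℕ → 𝒵))
    (u : Fin (K - K₀) × Fin B → ℝ) :
    μcal K K₀ B h A (permGrp K σ d) u = μcal K K₀ B h A d u := by
  rw [μcal, μcal]
  congr 1
  refine Finset.sum_congr rfl fun b _ => Finset.sum_congr rfl fun j _ => ?_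
  rw [Scal_permGrp]

/-- Claim A, sliced at fixed `u` and subsampling variable `x ∈ [0,1)`. -/
lemma claimA_slice (hA : Measurable fun q : (Fin K₀ → ℕ × (ℕ → 𝒵)) × 𝒵 => A q.1 q.2)
    {α : ℝ} (hα : ENNReal.ofReal (1 - α) ≤ 1) (hB : 0 < B)
    (ν : Measure (Fin (K+1) → ℕ × (ℕ → 𝒵))) [IsProbabilityMeasure ν]
    (hν2 : ∀ m : ℕ, 0 < ν {d | (d (Fin.last K)).1 = m} → ∀ σ : Equiv.Perm (Fin m),
      Measure.map (permGrp K σ) (ProbabilityTheory.cond ν {d | (d (Fin.last K)).1 = m})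
        = ProbabilityTheory.cond ν {d | (d (Fin.last K)).1 = m})
    (hν0 : ν {d | (d (Fin.last K)).1 = 0} = 0)
    (x : ℝ) (hx : x ∈ Set.Ico (0 : ℝ) 1) (u : Fin (K - K₀) × Fin B → ℝ) :
    ν {d | Stst K K₀ h A d x ≤ erealQuantile (1 - α) (μcal K K₀ B h A d u)}
      = ν {d | Stest K K₀ h A d ≤ erealQuantile (1 - α) (μcal K K₀ B h A d u)} := by
  have hfib : Measurable fun d : Fin (K+1) → ℕ × (ℕ → 𝒵) => (d (Fin.last K)).1 :=
    (measurable_pi_apply _).fst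
  have hQmeas : Measurable fun d : Fin (K+1) → ℕ × (ℕ → 𝒵) =>
      erealQuantile (1 - α) (μcal K K₀ B h A d u) :=
    meas_Qcal hA hα hB measurable_id measurable_const
  have hsetA : MeasurableSet {d : Fin (K+1) → ℕ × (ℕ → 𝒵) |
      Stst K K₀ h A d x ≤ erealQuantile (1 - α) (μcal K K₀ B h A d u)} :=
    measurableSet_le (meas_Stst hA measurable_id measurable_const) hQmeas
  have hsetA' : MeasurableSet {d : Fin (K+1) → ℕ × (ℕ → 𝒵) |
      Stest K K₀ h A d ≤ erealQuantile (1 - α) (μcal K K₀ B h A d u)} :=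
    measurableSet_le (meas_Stest hA measurable_id) hQmeas
  refine measure_eq_of_fibers ν _ hfib hsetA hsetA' fun m => ?_
  rcases Nat.eq_zero_or_pos m with rfl | hm
  · have hsub : ∀ (S : Set (Fin (K+1) → ℕ × (ℕ → 𝒵))),
        ν (S ∩ (fun d => (d (Fin.last K)).1) ⁻¹' {0}) = 0 := by
      intro S
      refine measure_mono_null (Set.inter_subset_right) ?_
      convert hν0 using 2
      rfl
    rw [hsub, hsub]
  · -- m ≥ 1
    set i : ℕ := ⌊x * (m : ℝ)⌋₊ with hidef
    have hi : i < m := by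
      rw [hidef, Nat.floor_lt (mul_nonneg hx.1 (Nat.cast_nonneg m))]
      calc x * (m : ℝ) < 1 * (m : ℝ) := by
            exact mul_lt_mul_of_pos_right hx.2 (by exact_mod_cast hm)
      _ = (m : ℝ) := one_mul _
    set σ : Equiv.Perm (Fin m) := Equiv.swap ⟨0, hm⟩ ⟨i, hi⟩ with hσdef
    have hfibset : MeasurableSet ((fun d : Fin (K+1) → ℕ × (ℕ → 𝒵) => (d (Fin.last K)).1) ⁻¹' {m}) :=
      hfib (measurableSet_singleton m)
    have hfibeq : ((fun d : Fin (K+1) → ℕ × (ℕ → 𝒵) => (d (Fin.last K)).1) ⁻¹' {m})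
        = {d : Fin (K+1) → ℕ × (ℕ → 𝒵) | (d (Fin.last K)).1 = m} := rfl
    refine cond_inv_fiber ν hfibset (permGrp K σ) (meas_permGrp K σ) ?_ hsetA hsetA' ?_
    · intro hpos
      rw [hfibeq]
      exact hν2 m (by rwa [hfibeq] at hpos) σ
    · -- set identity on the fiber
      have hstst : ∀ d : Fin (K+1) → ℕ × (ℕ → 𝒵), (d (Fin.last K)).1 = m →
          Stst K K₀ h A (permGrp K σ d) x = Stest K K₀ h A d := by
        intro d hd
        rw [Stst, Stest, scAt, scAt, trainD_permGrp, subI]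
        have hfst : (permGrp K σ d (Fin.last K)).1 = m := by rw [permGrp_fst, hd]
        have hsnd : (permGrp K σ d (Fin.last K)).2
            = fun i' => (d (Fin.last K)).2 (permExt σ i') := by
          rw [permGrp, if_pos rfl]
        rw [hfst, hsnd]
        have hidx : permExt σ (⌊x * ((m : ℕ) : ℝ)⌋₊) = 0 := by
          have hieq : ⌊x * ((m : ℕ) : ℝ)⌋₊ = i := rfl
          rw [hieq, permExt, dif_pos hi, hσdef, Equiv.swap_apply_right]
        simp only [hidx]
      have hQ : ∀ d : Fin (K+1) → ℕ × (ℕ → 𝒵),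
          erealQuantile (1 - α) (μcal K K₀ B h A (permGrp K σ d) u)
            = erealQuantile (1 - α) (μcal K K₀ B h A d u) := by
        intro d
        rw [μcal_permGrp]
      ext d
      simp only [Set.mem_inter_iff, Set.mem_preimage, Set.mem_singleton_iff, Set.mem_setOf_eq]
      constructor
      · rintro ⟨hd, hfm⟩
        refine ⟨?_, hfm⟩
        rwa [hstst d hfm, hQ d] at hd
      · rintro ⟨hd, hfm⟩
        refine ⟨?_, hfm⟩
        show Stst K K₀ h A (permGrp K σ d) x
          ≤ erealQuantile (1 - α) (μcal K K₀ B h A (permGrp K σ d) u)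
        rw [hstst d hfm, hQ d]
        exact hd

end Slice

section Swap

variable {𝒵 : Type*} [MeasurableSpace 𝒵] {K K₀ B : ℕ} {h : K₀ ≤ K}
  {A : (Fin K₀ → ℕ × (ℕ → 𝒵)) → 𝒵 → ℝ}

def swapMapD (K K₀ : ℕ) (h : K₀ ≤ K) (j : Fin (K - K₀)) (d : Fin (K+1) → ℕ × (ℕ → 𝒵)) :
    Fin (K+1) → ℕ × (ℕ → 𝒵) :=
  fun k => d (Equiv.swap (cIdx K K₀ h j) (Fin.last K) k)

lemma swapMapD_cIdx (j : Fin (K - K₀)) (d : Fin (K+1) → ℕ × (ℕ → 𝒵)) :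
    swapMapD K K₀ h j d (cIdx K K₀ h j) = d (Fin.last K) := by
  rw [swapMapD, Equiv.swap_apply_left]

lemma swapMapD_last (j : Fin (K - K₀)) (d : Fin (K+1) → ℕ × (ℕ → 𝒵)) :
    swapMapD K K₀ h j d (Fin.last K) = d (cIdx K K₀ h j) := by
  rw [swapMapD, Equiv.swap_apply_right]

lemma swapMapD_cIdx_ne {j j' : Fin (K - K₀)} (hj' : j' ≠ j) (d : Fin (K+1) → ℕ × (ℕ → 𝒵)) :
    swapMapD K K₀ h j d (cIdx K K₀ h j') = d (cIdx K K₀ h j') := by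
  rw [swapMapD, Equiv.swap_apply_of_ne_of_ne]
  · intro hc
    exact hj' (by
      have : K₀ + j'.1 = K₀ + j.1 := congrArg Fin.val hc
      exact Fin.ext (by omega))
  · exact cIdx_ne_last j'

lemma trainD_swapMapD (j : Fin (K - K₀)) (d : Fin (K+1) → ℕ × (ℕ → 𝒵)) :
    trainD K K₀ h (swapMapD K K₀ h j d) = trainD K K₀ h d := by
  funext jj
  rw [trainD, trainD, swapMapD, Equiv.swap_apply_of_ne_of_ne]
  · intro hc
    have : jj.1 = K₀ + j.1 := congrArg Fin.val hc
    have := jj.2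
    omega
  · intro hc
    have : jj.1 = K := congrArg Fin.val hc
    have := jj.2
    omega

def swapMapU (K K₀ B : ℕ) (j : Fin (K - K₀))
    (y : (Fin (K - K₀) × Fin B → ℝ) × (Fin B → ℝ)) :
    (Fin (K - K₀) × Fin B → ℝ) × (Fin B → ℝ) :=
  (fun q => if q.1 = j then y.2 q.2 else y.1 q, fun b => y.1 (j, b))

def swapMapP (K K₀ B : ℕ) (h : K₀ ≤ K) (j : Fin (K - K₀)) :
    (Fin (K+1) → ℕ × (ℕ → 𝒵)) × ((Fin (K - K₀) × Fin B → ℝ) × (Fin B → ℝ))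
      → (Fin (K+1) → ℕ × (ℕ → 𝒵)) × ((Fin (K - K₀) × Fin B → ℝ) × (Fin B → ℝ)) :=
  Prod.map (swapMapD K K₀ h j) (swapMapU K K₀ B j)

lemma Scal_swap_eq (j : Fin (K - K₀)) (d : Fin (K+1) → ℕ × (ℕ → 𝒵))
    (y : (Fin (K - K₀) × Fin B → ℝ) × (Fin B → ℝ)) (b : Fin B) :
    Scal K K₀ B h A (swapMapD K K₀ h j d) (swapMapU K K₀ B j y).1 b j
      = Stst K K₀ h A d (y.2 b) := by
  rw [Scal, Stst, scAt, scAt, trainD_swapMapD, subI, subI, swapMapD_cIdx]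
  simp [swapMapU]

lemma Scal_swap_ne {j j' : Fin (K - K₀)} (hj' : j' ≠ j) (d : Fin (K+1) → ℕ × (ℕ → 𝒵))
    (y : (Fin (K - K₀) × Fin B → ℝ) × (Fin B → ℝ)) (b : Fin B) :
    Scal K K₀ B h A (swapMapD K K₀ h j d) (swapMapU K K₀ B j y).1 b j'
      = Scal K K₀ B h A d y.1 b j' := by
  rw [Scal, Scal, scAt, scAt, trainD_swapMapD, subI, subI, swapMapD_cIdx_ne hj']
  rw [swapMapU]
  simp only [if_neg hj']

lemma Stst_swap_eq (j : Fin (K - K₀)) (d : Fin (K+1) → ℕ × (ℕ → 𝒵))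
    (y : (Fin (K - K₀) × Fin B → ℝ) × (Fin B → ℝ)) (b : Fin B) :
    Stst K K₀ h A (swapMapD K K₀ h j d) ((swapMapU K K₀ B j y).2 b)
      = Scal K K₀ B h A d y.1 b j := by
  rw [Stst, Scal, scAt, scAt, trainD_swapMapD, subI, subI, swapMapD_last]
  rw [swapMapU]

lemma μfull_swap (j : Fin (K - K₀)) (d : Fin (K+1) → ℕ × (ℕ → 𝒵))
    (y : (Fin (K - K₀) × Fin B → ℝ) × (Fin B → ℝ)) :
    μfull K K₀ B h A (swapMapD K K₀ h j d) (swapMapU K K₀ B j y).1 (swapMapU K K₀ B j y).2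
      = μfull K K₀ B h A d y.1 y.2 := by
  rw [μfull, μfull, ← Finset.sum_add_distrib, ← Finset.sum_add_distrib]
  refine Finset.sum_congr rfl fun b _ => ?_
  have split : ∀ (F : Fin (K - K₀) → Measure EReal),
      ∑ j', F j' = F j + ∑ j' ∈ Finset.univ.erase j, F j' :=
    fun F => (Finset.add_sum_erase _ F (Finset.mem_univ j)).symm
  rw [split, split (fun j' => wgt K K₀ B • Measure.dirac (Scal K K₀ B h A d y.1 b j'))]
  have herase : ∑ j' ∈ Finset.univ.erase j,
      wgt K K₀ B • Measure.dirac
        (Scal K K₀ B h A (swapMapD K K₀ h j d) (swapMapU K K₀ B j y).1 b j')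
      = ∑ j' ∈ Finset.univ.erase j,
        wgt K K₀ B • Measure.dirac (Scal K K₀ B h A d y.1 b j') := by
    refine Finset.sum_congr rfl fun j' hj' => ?_
    rw [Scal_swap_ne (Finset.ne_of_mem_erase hj')]
  rw [herase, Scal_swap_eq, Stst_swap_eq]
  abel

lemma meas_swapMapD (j : Fin (K - K₀)) :
    Measurable (swapMapD (𝒵 := 𝒵) K K₀ h j) :=
  measurable_pi_lambda _ fun k => measurable_pi_apply _

lemma meas_swapMapU (j : Fin (K - K₀)) :
    Measurable (swapMapU K K₀ B j) := by
  refine Measurable.prodMk ?_ ?_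
  · refine measurable_pi_lambda _ fun q => ?_
    by_cases hq : q.1 = j
    · simp only [hq, if_true]
      exact (measurable_pi_apply _).comp measurable_snd
    · simp only [hq, if_false]
      exact (measurable_pi_apply _).comp measurable_fst
  · exact measurable_pi_lambda _ fun b => (measurable_pi_apply _).comp measurable_fst

def swapSumE (n B : ℕ) (j : Fin n) : ((Fin n × Fin B) ⊕ Fin B) ≃ ((Fin n × Fin B) ⊕ Fin B) where
  toFun s := match s with
    | .inl q => if q.1 = j then .inr q.2 else .inl q
    | .inr b => .inl (j, b)
  invFun s := match s with
    | .inl q => if q.1 = j then .inr q.2 else .inl q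
    | .inr b => .inl (j, b)
  left_inv := by
    rintro (⟨j', b⟩ | b)
    · by_cases hj : j' = j
      · subst hj
        simp
      · simp [hj]
    · simp
  right_inv := by
    rintro (⟨j', b⟩ | b)
    · by_cases hj : j' = j
      · subst hj
        simp
      · simp [hj]
    · simp

lemma measurePreserving_swapMapU (j : Fin (K - K₀)) :
    MeasurePreserving (swapMapU K K₀ B j)
      ((Measure.pi fun _ : Fin (K - K₀) × Fin B => (volume : Measure ℝ).restrict (Set.Ico (0:ℝ) 1)).prod
        (Measure.pi fun _ : Fin B => (volume : Measure ℝ).restrict (Set.Ico (0:ℝ) 1)))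
      ((Measure.pi fun _ : Fin (K - K₀) × Fin B => (volume : Measure ℝ).restrict (Set.Ico (0:ℝ) 1)).prod
        (Measure.pi fun _ : Fin B => (volume : Measure ℝ).restrict (Set.Ico (0:ℝ) 1))) := by
  have hmp := measurePreserving_prod_swapPi (ι₁ := Fin (K - K₀) × Fin B) (ι₂ := Fin B)
    ((volume : Measure ℝ).restrict (Set.Ico (0:ℝ) 1)) (swapSumE (K - K₀) B j)
  have heq : (fun p : (Fin (K - K₀) × Fin B → ℝ) × (Fin B → ℝ) =>
      ((fun i => Sum.elim p.1 p.2 (swapSumE (K - K₀) B j (Sum.inl i))),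
       (fun i => Sum.elim p.1 p.2 (swapSumE (K - K₀) B j (Sum.inr i)))))
      = swapMapU K K₀ B j := by
    funext p
    refine Prod.ext ?_ ?_
    · funext q
      show Sum.elim p.1 p.2 (if q.1 = j then Sum.inr q.2 else Sum.inl q) = _
      rw [apply_ite (Sum.elim p.1 p.2)]
      rfl
    · rfl
  rw [heq] at hmp
  exact hmp

end Swap

section Core

variable {𝒵 : Type*} [MeasurableSpace 𝒵] {K K₀ B : ℕ} {h : K₀ ≤ K}
  {A : (Fin K₀ → ℕ × (ℕ → 𝒵)) → 𝒵 → ℝ}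

lemma core_coverage (hA : Measurable fun q : (Fin K₀ → ℕ × (ℕ → 𝒵)) × 𝒵 => A q.1 q.2)
    {α : ℝ} (hα₀ : 0 < α) (hα₁ : α < 1) (hB : 0 < B)
    (ν : Measure (Fin (K+1) → ℕ × (ℕ → 𝒵))) [IsProbabilityMeasure ν]
    (hν1 : ∀ σ : Equiv.Perm (Fin (K+1)),
      Measure.map (fun d (k : Fin (K+1)) => d (σ k)) ν = ν)
    (hν2 : ∀ m : ℕ, 0 < ν {d | (d (Fin.last K)).1 = m} → ∀ σ : Equiv.Perm (Fin m),
      Measure.map (permGrp K σ) (ProbabilityTheory.cond ν {d | (d (Fin.last K)).1 = m})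
        = ProbabilityTheory.cond ν {d | (d (Fin.last K)).1 = m})
    (hν0 : ν {d | (d (Fin.last K)).1 = 0} = 0) :
    ENNReal.ofReal (1 - α) ≤
      (ν.prod (Measure.pi fun _ : Fin (K - K₀) × Fin B =>
          (volume : Measure ℝ).restrict (Set.Ico (0 : ℝ) 1)))
        {q : (Fin (K+1) → ℕ × (ℕ → 𝒵)) × (Fin (K - K₀) × Fin B → ℝ) |
          Stest K K₀ h A q.1 ≤ erealQuantile (1 - α) (μcal K K₀ B h A q.1 q.2)} := by
  classical
  set κ : Measure ℝ := (volume : Measure ℝ).restrict (Set.Ico (0 : ℝ) 1) with hκdef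
  haveI : IsProbabilityMeasure κ := ⟨by rw [hκdef, Measure.restrict_apply_univ, Real.volume_Ico]; norm_num⟩
  set πU : Measure (Fin (K - K₀) × Fin B → ℝ) := Measure.pi fun _ => κ with hπU
  set πV : Measure (Fin B → ℝ) := Measure.pi fun _ => κ with hπV
  set ρ : Measure ((Fin (K+1) → ℕ × (ℕ → 𝒵)) × ((Fin (K - K₀) × Fin B → ℝ) × (Fin B → ℝ))) :=
    ν.prod (πU.prod πV) with hρ
  have hα1 : ENNReal.ofReal (1 - α) ≤ 1 := by
    rw [← ENNReal.ofReal_one]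
    exact ENNReal.ofReal_le_ofReal (by linarith)
  -- measurable score/quantile functions on the big space
  have hScal : ∀ (b : Fin B) (j : Fin (K - K₀)), Measurable fun p :
      (Fin (K+1) → ℕ × (ℕ → 𝒵)) × ((Fin (K - K₀) × Fin B → ℝ) × (Fin B → ℝ)) =>
      Scal K K₀ B h A p.1 p.2.1 b j :=
    fun b j => meas_Scal hA measurable_fst (measurable_fst.comp measurable_snd) b j
  have hStst : ∀ b : Fin B, Measurable fun p :
      (Fin (K+1) → ℕ × (ℕ → 𝒵)) × ((Fin (K - K₀) × Fin B → ℝ) × (Fin B → ℝ)) =>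
      Stst K K₀ h A p.1 (p.2.2 b) :=
    fun b => meas_Stst hA measurable_fst
      ((measurable_pi_apply b).comp (measurable_snd.comp measurable_snd))
  have hStest : Measurable fun p :
      (Fin (K+1) → ℕ × (ℕ → 𝒵)) × ((Fin (K - K₀) × Fin B → ℝ) × (Fin B → ℝ)) =>
      Stest K K₀ h A p.1 := meas_Stest hA measurable_fst
  have hQf : Measurable fun p :
      (Fin (K+1) → ℕ × (ℕ → 𝒵)) × ((Fin (K - K₀) × Fin B → ℝ) × (Fin B → ℝ)) =>
      erealQuantile (1 - α) (μfull K K₀ B h A p.1 p.2.1 p.2.2) :=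
    meas_Qfull hA hα1 hB measurable_fst (measurable_fst.comp measurable_snd)
      (measurable_snd.comp measurable_snd)
  have hQc : Measurable fun p :
      (Fin (K+1) → ℕ × (ℕ → 𝒵)) × ((Fin (K - K₀) × Fin B → ℝ) × (Fin B → ℝ)) =>
      erealQuantile (1 - α) (μcal K K₀ B h A p.1 p.2.1) :=
    meas_Qcal hA hα1 hB measurable_fst (measurable_fst.comp measurable_snd)
  -- the events
  set Ecal : Fin (K - K₀) → Fin B → Set ((Fin (K+1) → ℕ × (ℕ → 𝒵)) ×
      ((Fin (K - K₀) × Fin B → ℝ) × (Fin B → ℝ))) :=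
    fun j b => {p | Scal K K₀ B h A p.1 p.2.1 b j
      ≤ erealQuantile (1 - α) (μfull K K₀ B h A p.1 p.2.1 p.2.2)} with hEcal
  set Efb : Fin B → Set ((Fin (K+1) → ℕ × (ℕ → 𝒵)) ×
      ((Fin (K - K₀) × Fin B → ℝ) × (Fin B → ℝ))) :=
    fun b => {p | Stst K K₀ h A p.1 (p.2.2 b)
      ≤ erealQuantile (1 - α) (μfull K K₀ B h A p.1 p.2.1 p.2.2)} with hEfb
  set EQ : Fin B → Set ((Fin (K+1) → ℕ × (ℕ → 𝒵)) ×
      ((Fin (K - K₀) × Fin B → ℝ) × (Fin B → ℝ))) :=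
    fun b => {p | Stst K K₀ h A p.1 (p.2.2 b)
      ≤ erealQuantile (1 - α) (μcal K K₀ B h A p.1 p.2.1)} with hEQ
  set Etest : Set ((Fin (K+1) → ℕ × (ℕ → 𝒵)) ×
      ((Fin (K - K₀) × Fin B → ℝ) × (Fin B → ℝ))) :=
    {p | Stest K K₀ h A p.1
      ≤ erealQuantile (1 - α) (μcal K K₀ B h A p.1 p.2.1)} with hEtest
  have hEcalM : ∀ j b, MeasurableSet (Ecal j b) := fun j b => measurableSet_le (hScal b j) hQf
  have hEfbM : ∀ b, MeasurableSet (Efb b) := fun b => measurableSet_le (hStst b) hQf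
  have hEQM : ∀ b, MeasurableSet (EQ b) := fun b => measurableSet_le (hStst b) hQc
  have hEtestM : MeasurableSet Etest := measurableSet_le hStest hQc
  -- Step 1: pointwise counting via quantile attainment
  have hcount : ∀ p : (Fin (K+1) → ℕ × (ℕ → 𝒵)) ×
      ((Fin (K - K₀) × Fin B → ℝ) × (Fin B → ℝ)),
      ENNReal.ofReal (1 - α) ≤
        (∑ b : Fin B, ∑ j : Fin (K - K₀), (Ecal j b).indicator (fun _ => wgt K K₀ B) p)
          + ∑ b : Fin B, (Efb b).indicator (fun _ => wgt K K₀ B) p := by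
    intro p
    have hatt := quantile_attained (μ := μfull K K₀ B h A p.1 p.2.1 p.2.2)
      (fun t => μfull_Iic_ne_top hB _ _ _ t)
      (by rw [μfull_univ hB]; exact hα1)
    rw [μfull_apply _ _ _ measurableSet_Iic] at hatt
    refine le_trans hatt (le_of_eq ?_)
    simp only [hEcal, hEfb, Set.indicator_apply, Set.mem_Iic, Set.mem_setOf_eq]
  -- Step 2: integrate over ρ
  have hint : ENNReal.ofReal (1 - α) ≤
      (∑ b : Fin B, ∑ j : Fin (K - K₀), wgt K K₀ B * ρ (Ecal j b))
        + ∑ b : Fin B, wgt K K₀ B * ρ (Efb b) := by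
    have h1 : ENNReal.ofReal (1 - α) = ∫⁻ _, ENNReal.ofReal (1 - α) ∂ρ := by
      rw [lintegral_const, measure_univ, mul_one]
    rw [h1]
    refine le_trans (lintegral_mono hcount) (le_of_eq ?_)
    rw [lintegral_add_left]
    · congr 1
      · rw [lintegral_finset_sum]
        · refine Finset.sum_congr rfl fun b _ => ?_
          rw [lintegral_finset_sum]
          · exact Finset.sum_congr rfl fun j _ => lintegral_indicator_const (hEcalM j b) _
          · exact fun j _ => measurable_const.indicator (hEcalM j b)
        · exact fun b _ => Finset.measurable_sum _ fun j _ =>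
            measurable_const.indicator (hEcalM j b)
      · rw [lintegral_finset_sum]
        · exact Finset.sum_congr rfl fun b _ => lintegral_indicator_const (hEfbM b) _
        · exact fun b _ => measurable_const.indicator (hEfbM b)
    · exact Finset.measurable_sum _ fun b _ => Finset.measurable_sum _ fun j _ =>
        measurable_const.indicator (hEcalM j b)
  -- Step 3: group-swap exchangeability
  have hswap : ∀ (j : Fin (K - K₀)) (b : Fin B), ρ (Ecal j b) = ρ (Efb b) := by
    intro j b
    have hpresD : MeasurePreserving (swapMapD (𝒵 := 𝒵) K K₀ h j) ν ν :=
      ⟨meas_swapMapD j, hν1 (Equiv.swap (cIdx K K₀ h j) (Fin.last K))⟩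
    have hpres : MeasurePreserving (swapMapP (𝒵 := 𝒵) K K₀ B h j) ρ ρ :=
      hpresD.prod (measurePreserving_swapMapU j)
    have hpre : swapMapP (𝒵 := 𝒵) K K₀ B h j ⁻¹' (Ecal j b) = Efb b := by
      ext p
      simp only [Set.mem_preimage, hEcal, hEfb, Set.mem_setOf_eq, swapMapP, Prod.map]
      rw [Scal_swap_eq, μfull_swap]
    rw [← hpre, hpres.measure_preimage (hEcalM j b).nullMeasurableSet]
  -- Step 4: the quantile with the +∞ atom dominates
  have hQle : ∀ p : (Fin (K+1) → ℕ × (ℕ → 𝒵)) ×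
      ((Fin (K - K₀) × Fin B → ℝ) × (Fin B → ℝ)),
      erealQuantile (1 - α) (μfull K K₀ B h A p.1 p.2.1 p.2.2)
        ≤ erealQuantile (1 - α) (μcal K K₀ B h A p.1 p.2.1) := by
    intro p
    refine quantile_mono fun t => ?_
    rw [μcal_apply _ _ measurableSet_Iic, μfull_apply _ _ _ measurableSet_Iic]
    refine add_le_add_right ?_ _
    by_cases ht : (⊤ : EReal) ≤ t
    · have htop : t = ⊤ := top_le_iff.1 ht
      subst htop
      rw [Set.indicator_of_mem (Set.mem_Iic.2 le_rfl)]
      have : ∀ b : Fin B, (Set.Iic (⊤ : EReal)).indicator (fun _ => wgt K K₀ B)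
          (Stst K K₀ h A p.1 (p.2.2 b)) = wgt K K₀ B :=
        fun b => Set.indicator_of_mem (Set.mem_Iic.2 le_top) _
      rw [Finset.sum_congr rfl fun b _ => this b, Finset.sum_const, Finset.card_univ,
        Fintype.card_fin, nsmul_eq_mul, B_mul_wgt hB]
    · rw [Set.indicator_of_notMem (fun hc => ht (Set.mem_Iic.1 hc))]
      exact zero_le
  have hEfbEQ : ∀ b, Efb b ⊆ EQ b := by
    intro b p hp
    exact le_trans hp (hQle p)
  -- Step 5: within-group exchangeability (Claim A)
  have hclaimA : ∀ b : Fin B, ρ (EQ b) = ρ Etest := by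
    intro b
    rw [hρ, Measure.prod_apply_symm (hEQM b), Measure.prod_apply_symm hEtestM]
    refine lintegral_congr_ae ?_
    have hae : ∀ᵐ y ∂(πU.prod πV), y.2 b ∈ Set.Ico (0 : ℝ) 1 := by
      have hsub : {y : (Fin (K - K₀) × Fin B → ℝ) × (Fin B → ℝ) |
          ¬ (y.2 b ∈ Set.Ico (0 : ℝ) 1)} ⊆
          Prod.snd ⁻¹' (Set.pi Set.univ fun _ : Fin B => Set.Ico (0 : ℝ) 1)ᶜ := by
        intro y hy hmem
        exact hy (hmem b (Set.mem_univ b))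
      have hpiset : MeasurableSet (Set.pi Set.univ fun _ : Fin B => Set.Ico (0 : ℝ) 1) :=
        MeasurableSet.univ_pi fun _ => measurableSet_Ico
      have hpi1 : πV (Set.pi Set.univ fun _ : Fin B => Set.Ico (0 : ℝ) 1) = 1 := by
        rw [hπV, Measure.pi_pi]
        have : κ (Set.Ico (0 : ℝ) 1) = 1 := by
          rw [hκdef, Measure.restrict_apply measurableSet_Ico, Set.inter_self, Real.volume_Ico]
          norm_num
        simp [this]
      have hnull : (πU.prod πV)
          (Prod.snd ⁻¹' (Set.pi Set.univ fun _ : Fin B => Set.Ico (0 : ℝ) 1)ᶜ) = 0 := by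
        have hsnd : (πU.prod πV) (Prod.snd ⁻¹' (Set.pi Set.univ fun _ : Fin B =>
            Set.Ico (0 : ℝ) 1)ᶜ) = πV (Set.pi Set.univ fun _ : Fin B => Set.Ico (0 : ℝ) 1)ᶜ := by
          rw [← Measure.snd_apply hpiset.compl, Measure.snd_prod]
        rw [hsnd, measure_compl hpiset (measure_ne_top _ _), hpi1, measure_univ, tsub_self]
      exact measure_mono_null hsub hnull
    refine hae.mono fun y hy => ?_
    have hslice := claimA_slice (h := h) hA hα1 hB ν hν2 hν0 (y.2 b) hy y.1
    convert hslice using 2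
    rfl
    rfl
  -- Step 6: combine
  have hsum : (∑ b : Fin B, ∑ j : Fin (K - K₀), wgt K K₀ B * ρ (Ecal j b))
      + ∑ b : Fin B, wgt K K₀ B * ρ (Efb b)
      ≤ ((B : ℝ≥0∞) * ((K - K₀ + 1 : ℕ) : ℝ≥0∞)) * wgt K K₀ B * ρ Etest := by
    have hterm : ∀ (j : Fin (K - K₀)) (b : Fin B),
        wgt K K₀ B * ρ (Ecal j b) ≤ wgt K K₀ B * ρ Etest := by
      intro j b
      rw [hswap j b]
      refine mul_le_mul_right ?_ _
      rw [← hclaimA b]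
      exact measure_mono (hEfbEQ b)
    have hterm2 : ∀ b : Fin B, wgt K K₀ B * ρ (Efb b) ≤ wgt K K₀ B * ρ Etest := by
      intro b
      refine mul_le_mul_right ?_ _
      rw [← hclaimA b]
      exact measure_mono (hEfbEQ b)
    calc (∑ b : Fin B, ∑ j : Fin (K - K₀), wgt K K₀ B * ρ (Ecal j b))
        + ∑ b : Fin B, wgt K K₀ B * ρ (Efb b)
        ≤ (∑ _b : Fin B, ∑ _j : Fin (K - K₀), wgt K K₀ B * ρ Etest)
          + ∑ _b : Fin B, wgt K K₀ B * ρ Etest := by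
          refine add_le_add ?_ ?_
          · exact Finset.sum_le_sum fun b _ => Finset.sum_le_sum fun j _ => hterm j b
          · exact Finset.sum_le_sum fun b _ => hterm2 b
      _ = ((B : ℝ≥0∞) * ((K - K₀ + 1 : ℕ) : ℝ≥0∞)) * wgt K K₀ B * ρ Etest := by
          simp only [Finset.sum_const, Finset.card_univ, Fintype.card_fin, nsmul_eq_mul]
          push_cast
          ring
  have hfinal : ENNReal.ofReal (1 - α) ≤ ρ Etest := by
    refine le_trans hint (le_trans hsum (le_of_eq ?_))
    rw [wgt_cancel hB, one_mul]
  -- transfer to the (d, u)-marginal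
  have hproj : ρ Etest = (ν.prod πU)
      {q : (Fin (K+1) → ℕ × (ℕ → 𝒵)) × (Fin (K - K₀) × Fin B → ℝ) |
        Stest K K₀ h A q.1 ≤ erealQuantile (1 - α) (μcal K K₀ B h A q.1 q.2)} := by
    have hEset : MeasurableSet {q : (Fin (K+1) → ℕ × (ℕ → 𝒵)) ×
        (Fin (K - K₀) × Fin B → ℝ) |
        Stest K K₀ h A q.1 ≤ erealQuantile (1 - α) (μcal K K₀ B h A q.1 q.2)} :=
      measurableSet_le (meas_Stest hA measurable_fst)
        (meas_Qcal hA hα1 hB measurable_fst measurable_snd)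
    have hmapeq : Measure.map (Prod.map (id : (Fin (K+1) → ℕ × (ℕ → 𝒵)) → _)
        (Prod.fst : ((Fin (K - K₀) × Fin B → ℝ) × (Fin B → ℝ)) → _)) ρ = ν.prod πU := by
      rw [hρ, ← Measure.map_prod_map _ _ measurable_id measurable_fst, Measure.map_id]
      congr 1
      rw [← Measure.fst, Measure.fst_prod]
    have hpre2 : Etest = (Prod.map (id : (Fin (K+1) → ℕ × (ℕ → 𝒵)) → _)
        (Prod.fst : ((Fin (K - K₀) × Fin B → ℝ) × (Fin B → ℝ)) → _)) ⁻¹'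
        {q : (Fin (K+1) → ℕ × (ℕ → 𝒵)) × (Fin (K - K₀) × Fin B → ℝ) |
          Stest K K₀ h A q.1 ≤ erealQuantile (1 - α) (μcal K K₀ B h A q.1 q.2)} := rfl
    rw [hpre2, ← Measure.map_apply (measurable_id.prodMap measurable_fst) hEset, hmapeq]
  rw [← hproj]
  exact hfinal

end Core


/-- **Proposition (Coverage of Repeated Subsampling, lower bound).**
Under hierarchical exchangeability, with subsampling indices `i_k^{(b)} = ⌊U_k^{(b)}·N_k⌋`
drawn (via an independent i.i.d. array of `Uniform[0,1)` variables) uniformly with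
replacement from each calibration group, the Repeated Subsampling prediction set, whose
threshold is the `(1-α)`-quantile of
`Σ_b Σ_k (1/(B(K₁+1))) δ_{s(Z_{k,i_k^{(b)}})} + (1/(K₁+1)) δ_{+∞}`,
covers the test response with probability at least `1 - α`. -/
theorem repeated_subsampling_coverage_lower
    {𝒳 𝒴 Ω₁ Ω₂ : Type*} [MeasurableSpace 𝒳] [MeasurableSpace 𝒴]
    [MeasurableSpace Ω₁] [MeasurableSpace Ω₂]
    (P₁ : Measure Ω₁) [IsProbabilityMeasure P₁]
    (P₂ : Measure Ω₂) [IsProbabilityMeasure P₂]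
    (K K₀ B : ℕ) (hK₀ : K₀ ≤ K) (hB : 0 < B)
    (N : ℕ → Ω₁ → ℕ) (Z : ℕ → ℕ → Ω₁ → 𝒳 × 𝒴)
    (hN : ∀ k ω, 1 ≤ N k ω)
    (hNmeas : ∀ k, Measurable (N k)) (hZmeas : ∀ k i, Measurable (Z k i))
    (hexch : HierExch (K + 1) P₁ N Z)
    (U : ℕ → ℕ → Ω₂ → ℝ) (hUmeas : ∀ k b, Measurable (U k b))
    (hU : Measure.map
        (fun ω₂ => fun p : Fin (K - K₀) × Fin B => U (K₀ + p.1.1) p.2.1 ω₂) P₂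
      = Measure.pi fun _ : Fin (K - K₀) × Fin B =>
          (volume : Measure ℝ).restrict (Set.Ico (0 : ℝ) 1))
    (α : ℝ) (hα₀ : 0 < α) (hα₁ : α < 1)
    (A : (Fin K₀ → ℕ × (ℕ → 𝒳 × 𝒴)) → 𝒳 × 𝒴 → ℝ)
    (hA : Measurable fun p : (Fin K₀ → ℕ × (ℕ → 𝒳 × 𝒴)) × (𝒳 × 𝒴) => A p.1 p.2) :
    ENNReal.ofReal (1 - α) ≤
      (P₁.prod P₂) {ω : Ω₁ × Ω₂ | (A (hierData K₀ N Z ω.1) (Z K 0 ω.1) : EReal)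
          ≤ erealQuantile (1 - α)
              ((∑ b ∈ Finset.range B, ∑ k ∈ Finset.Ico K₀ K,
                  ((B : ℝ≥0∞) * ((K - K₀ + 1 : ℕ) : ℝ≥0∞))⁻¹
                    • Measure.dirac
                        ((A (hierData K₀ N Z ω.1)
                            (Z k (Nat.floor (U k b ω.2 * (N k ω.1 : ℝ))) ω.1) : EReal)))
                + (((K - K₀ + 1 : ℕ) : ℝ≥0∞))⁻¹ • Measure.dirac (⊤ : EReal))} := by
  classical
  have hα1 : ENNReal.ofReal (1 - α) ≤ 1 := by
    rw [← ENNReal.ofReal_one]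
    exact ENNReal.ofReal_le_ofReal (by linarith)
  set D : Ω₁ → (Fin (K+1) → ℕ × (ℕ → 𝒳 × 𝒴)) := hierData (K+1) N Z with hD
  have hDmeas : Measurable D :=
    measurable_pi_lambda _ fun k => Measurable.prodMk (hNmeas k.1)
      (measurable_pi_lambda _ fun i => hZmeas k.1 i)
  set ν : Measure (Fin (K+1) → ℕ × (ℕ → 𝒳 × 𝒴)) := Measure.map D P₁ with hν
  haveI : IsProbabilityMeasure ν := Measure.isProbabilityMeasure_map hDmeas.aemeasurable
  have hfibM : ∀ m : ℕ, MeasurableSet {d : Fin (K+1) → ℕ × (ℕ → 𝒳 × 𝒴) |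
      (d (Fin.last K)).1 = m} :=
    fun m => ((measurable_pi_apply (Fin.last K)).fst) (measurableSet_singleton m)
  have hpre : ∀ m : ℕ, D ⁻¹' {d | (d (Fin.last K)).1 = m} = {ω | N K ω = m} := fun m => rfl
  -- (i) transferred
  have hν1 : ∀ σ : Equiv.Perm (Fin (K+1)),
      Measure.map (fun d (k : Fin (K+1)) => d (σ k)) ν = ν := by
    intro σ
    have hm : Measurable fun (d : Fin (K+1) → ℕ × (ℕ → 𝒳 × 𝒴)) (k : Fin (K+1)) => d (σ k) :=
      measurable_pi_lambda _ fun k => measurable_pi_apply _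
    rw [hν, Measure.map_map hm hDmeas]
    exact hexch.1 σ
  -- null group size zero
  have hν0 : ν {d | (d (Fin.last K)).1 = 0} = 0 := by
    rw [hν, Measure.map_apply hDmeas (hfibM 0), hpre 0]
    have : {ω : Ω₁ | N K ω = 0} = ∅ := by
      ext ω
      simp only [Set.mem_setOf_eq, Set.mem_empty_iff_false, iff_false]
      have := hN K ω
      omega
    rw [this, measure_empty]
  -- conditional measures commute with the map
  have hcond : ∀ m : ℕ, ProbabilityTheory.cond ν {d | (d (Fin.last K)).1 = m}
      = Measure.map D (ProbabilityTheory.cond P₁ {ω | N K ω = m}) := by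
    intro m
    rw [ProbabilityTheory.cond, ProbabilityTheory.cond, Measure.map_smul,
      Measure.restrict_map hDmeas (hfibM m), hpre m, hν,
      Measure.map_apply hDmeas (hfibM m), hpre m]
  -- (ii) transferred
  have hν2 : ∀ m : ℕ, 0 < ν {d | (d (Fin.last K)).1 = m} → ∀ σ : Equiv.Perm (Fin m),
      Measure.map (permGrp K σ)
          (ProbabilityTheory.cond ν {d | (d (Fin.last K)).1 = m})
        = ProbabilityTheory.cond ν {d | (d (Fin.last K)).1 = m} := by
    intro m hpos σ
    have hP : 0 < P₁ {ω | N K ω = m} := by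
      rwa [hν, Measure.map_apply hDmeas (hfibM m), hpre m] at hpos
    have hmain := hexch.2 K (Nat.lt_succ_self K) m hP σ
    have hcompose : hierData (K+1) N
        (fun k' i => if k' = K then Z k' (permExt σ i) else Z k' i) = permGrp K σ ∘ D := by
      funext ω j
      by_cases hj : j = Fin.last K
      · have hjK : (j : ℕ) = K := by rw [hj]; rfl
        simp only [hierData, Function.comp_apply, permGrp, hj, if_pos rfl, hD]
        refine Prod.ext rfl ?_
        funext i
        simp [Fin.val_last]
      · have hjK : (j : ℕ) ≠ K := fun hc => hj (Fin.ext hc)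
        simp only [hierData, Function.comp_apply, permGrp, hj, if_neg, hD, hjK, ite_false]
    rw [hcond m, Measure.map_map (meas_permGrp K σ) hDmeas, ← hcompose, hmain]
  -- reduction to the canonical space
  set Ucal : Ω₂ → (Fin (K - K₀) × Fin B → ℝ) :=
    fun ω₂ => fun p : Fin (K - K₀) × Fin B => U (K₀ + p.1.1) p.2.1 ω₂ with hUcal
  have hUc : Measurable Ucal := measurable_pi_lambda _ fun p => hUmeas _ _
  set E : Set ((Fin (K+1) → ℕ × (ℕ → 𝒳 × 𝒴)) × (Fin (K - K₀) × Fin B → ℝ)) :=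
    {q | Stest K K₀ hK₀ A q.1 ≤ erealQuantile (1 - α) (μcal K K₀ B hK₀ A q.1 q.2)} with hE
  have hEset : MeasurableSet E :=
    measurableSet_le (meas_Stest hA measurable_fst)
      (meas_Qcal hA hα1 hB measurable_fst measurable_snd)
  have hgoalset : {ω : Ω₁ × Ω₂ | (A (hierData K₀ N Z ω.1) (Z K 0 ω.1) : EReal)
          ≤ erealQuantile (1 - α)
              ((∑ b ∈ Finset.range B, ∑ k ∈ Finset.Ico K₀ K,
                  ((B : ℝ≥0∞) * ((K - K₀ + 1 : ℕ) : ℝ≥0∞))⁻¹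
                    • Measure.dirac
                        ((A (hierData K₀ N Z ω.1)
                            (Z k (Nat.floor (U k b ω.2 * (N k ω.1 : ℝ))) ω.1) : EReal)))
                + (((K - K₀ + 1 : ℕ) : ℝ≥0∞))⁻¹ • Measure.dirac (⊤ : EReal))}
      = (fun ω : Ω₁ × Ω₂ => (D ω.1, Ucal ω.2)) ⁻¹' E := by
    ext ω
    simp only [Set.mem_setOf_eq, Set.mem_preimage, hE]
    have hmeaseq : (∑ b ∈ Finset.range B, ∑ k ∈ Finset.Ico K₀ K,
          ((B : ℝ≥0∞) * ((K - K₀ + 1 : ℕ) : ℝ≥0∞))⁻¹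
            • Measure.dirac
                ((A (hierData K₀ N Z ω.1)
                    (Z k (Nat.floor (U k b ω.2 * (N k ω.1 : ℝ))) ω.1) : EReal)))
          + (((K - K₀ + 1 : ℕ) : ℝ≥0∞))⁻¹ • Measure.dirac (⊤ : EReal)
        = μcal K K₀ B hK₀ A (D ω.1) (Ucal ω.2) := by
      rw [μcal]
      congr 1
      rw [← Fin.sum_univ_eq_sum_range (fun b => ∑ k ∈ Finset.Ico K₀ K,
        ((B : ℝ≥0∞) * ((K - K₀ + 1 : ℕ) : ℝ≥0∞))⁻¹
          • Measure.dirac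
              ((A (hierData K₀ N Z ω.1)
                  (Z k (Nat.floor (U k b ω.2 * (N k ω.1 : ℝ))) ω.1) : EReal))) B]
      refine Finset.sum_congr rfl fun b _ => ?_
      rw [Finset.sum_Ico_eq_sum_range]
      rw [← Fin.sum_univ_eq_sum_range (fun j =>
        ((B : ℝ≥0∞) * ((K - K₀ + 1 : ℕ) : ℝ≥0∞))⁻¹
          • Measure.dirac
              ((A (hierData K₀ N Z ω.1)
                  (Z (K₀ + j) (Nat.floor (U (K₀ + j) b ω.2 * (N (K₀ + j) ω.1 : ℝ))) ω.1)
                : EReal))) (K - K₀)]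
      exact Finset.sum_congr rfl fun j _ => rfl
    rw [hmeaseq]
    rfl
  rw [hgoalset]
  have hfun : (fun ω : Ω₁ × Ω₂ => (D ω.1, Ucal ω.2)) = Prod.map D Ucal := rfl
  rw [hfun, ← Measure.map_apply (hDmeas.prodMap hUc) hEset]
  have hmapmap : Measure.map (Prod.map D Ucal) (P₁.prod P₂)
      = ν.prod (Measure.pi fun _ : Fin (K - K₀) × Fin B =>
          (volume : Measure ℝ).restrict (Set.Ico (0 : ℝ) 1)) := by
    rw [← Measure.map_prod_map _ _ hDmeas hUc, hν, hUcal, hU]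
  rw [hmapmap]
  exact core_coverage hA hα₀ hα₁ hB ν hν1 hν2 hν0
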